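/- Let H be a finite-dimensional complex Hilbert space and let (f_1,…,f_n) be any finite sequence of vectors in H. Then Φ(f_1,…,f_n) is a Parseval frame for span{f_1,…,f_n}, and span of the output equals span{f_1,…,f_n}. -/

import Mathlib

open scoped ComplexInnerProductSpace
open Finset Filter

set_option maxRecDepth 8000

open scoped Classical in
/-- One step of the generalized Gram–Schmidt procedure (GGSP): step `k` uses the
input vector `fk = f k` and the current tuple `g` (whose entries at indices `< k`
have already been processed).  Here `⟪a, b⟫` is conjugate-linear in `a`, so the
paper's `⟨f_k, g_j⟩` (conjugate-linear in the second slot) is `⟪g j, f k⟫`. -/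
noncomputable def ggspStep {H : Type*} [NormedAddCommGroup H] [InnerProductSpace ℂ H]
    {n : ℕ} (k : Fin n) (fk : H) (g : Fin n → H) : Fin n → H :=
  if fk = 0 then Function.update g k 0
  else
    let u := fk - ∑ j ∈ Finset.univ.filter (fun j : Fin n => j < k), ⟪g j, fk⟫ • g j
    if u = 0 then
      fun i =>
        if i < k then
          g i + (((1 / ‖fk‖ ^ 2) * (1 / Real.sqrt (1 + ‖fk‖ ^ 2) - 1) : ℝ)) •
            (⟪fk, g i⟫ • fk)
        else if i = k then (Real.sqrt (1 + ‖fk‖ ^ 2))⁻¹ • fk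
        else g i
    else Function.update g k (‖u‖⁻¹ • u)

/-- The generalized Gram–Schmidt procedure `Φ` of Casazza--Kutyniok. -/
noncomputable def GGSP {H : Type*} [NormedAddCommGroup H] [InnerProductSpace ℂ H]
    {n : ℕ} (f : Fin n → H) : Fin n → H :=
  (List.finRange n).foldl (fun g k => ggspStep k (f k) g) f

/-- `(f i)₁ⁿ`, a tuple of vectors of `W`, is a Parseval frame for the subspace `W`. -/
def IsParsevalFrameFor {H : Type*} [NormedAddCommGroup H] [InnerProductSpace ℂ H]
    {n : ℕ} (W : Submodule ℂ H) (f : Fin n → H) : Prop :=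
  (∀ i, f i ∈ W) ∧ ∀ w ∈ W, ∑ i, ‖⟪w, f i⟫‖ ^ 2 = ‖w‖ ^ 2

namespace GGSPaux
variable {H : Type*} [NormedAddCommGroup H] [InnerProductSpace ℂ H] {n : ℕ}

def PK (n k : ℕ) : Finset (Fin n) := Finset.univ.filter (fun i => (i : ℕ) < k)

lemma mem_PK {k : ℕ} {i : Fin n} : i ∈ PK n k ↔ (i : ℕ) < k := by
  rw [PK, Finset.mem_filter]
  exact ⟨fun h => h.2, fun h => ⟨Finset.mem_univ i, h⟩⟩

lemma filter_lt_eq_PK (k : Fin n) (inst : DecidablePred (fun j : Fin n => j < k)) :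
    @Finset.filter _ (fun j : Fin n => j < k) inst Finset.univ = PK n (k : ℕ) := by
  ext i
  rw [Finset.mem_filter, mem_PK]
  exact ⟨fun h => h.2, fun h => ⟨Finset.mem_univ i, h⟩⟩

noncomputable def uVec (k : Fin n) (fk : H) (g : Fin n → H) : H :=
  fk - ∑ j ∈ PK n (k : ℕ), ⟪g j, fk⟫ • g j

lemma ggspStep_zero (k : Fin n) (g : Fin n → H) :
    ggspStep k (0 : H) g = Function.update g k 0 := by
  rw [ggspStep, if_pos rfl]

lemma ggspStep_indep {fk : H} (hfk : fk ≠ 0) (k : Fin n) (g : Fin n → H)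
    (hu : uVec k fk g ≠ 0) :
    ggspStep k fk g = Function.update g k (‖uVec k fk g‖⁻¹ • uVec k fk g) := by
  rw [uVec] at hu ⊢
  rw [ggspStep, if_neg hfk]
  simp only []
  split_ifs with h
  · rw [filter_lt_eq_PK] at h
    exact absurd h hu
  · rw [filter_lt_eq_PK]

lemma ggspStep_dep {fk : H} (hfk : fk ≠ 0) (k : Fin n) (g : Fin n → H)
    (hu : uVec k fk g = 0) :
    ggspStep k fk g = fun i : Fin n =>
      if (i : ℕ) < (k : ℕ) then
        g i + (((1 / ‖fk‖ ^ 2) * (1 / Real.sqrt (1 + ‖fk‖ ^ 2) - 1) : ℝ)) •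
          (⟪fk, g i⟫ • fk)
      else if i = k then (Real.sqrt (1 + ‖fk‖ ^ 2))⁻¹ • fk
      else g i := by
  rw [uVec] at hu
  rw [ggspStep, if_neg hfk]
  simp only []
  split_ifs with h
  · funext i
    by_cases hik : i < k
    · rw [if_pos hik, if_pos (show (i : ℕ) < (k : ℕ) from hik)]
    · rw [if_neg hik, if_neg (show ¬ (i : ℕ) < (k : ℕ) from hik)]
  · rw [filter_lt_eq_PK] at h
    exact absurd hu h

/-- span of the first `k` vectors -/
def spanLT (f : Fin n → H) (k : ℕ) : Submodule ℂ H :=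
  Submodule.span ℂ (f '' {i | (i : ℕ) < k})

lemma spanLT_succ (f : Fin n → H) (k : Fin n) :
    spanLT f ((k : ℕ) + 1) = spanLT f (k : ℕ) ⊔ (ℂ ∙ f k) := by
  have hset : {i : Fin n | (i : ℕ) < (k : ℕ) + 1} = ({i : Fin n | (i : ℕ) < (k : ℕ)} : Set (Fin n)) ∪ {k} := by
    ext i; simp only [Set.mem_setOf_eq, Set.mem_union, Set.mem_singleton_iff, Fin.ext_iff]; omega
  rw [spanLT, hset, Set.image_union, Set.image_singleton, Submodule.span_union]
  rfl

lemma spanLT_congr {f g : Fin n → H} (k : ℕ) (h : ∀ i : Fin n, (i : ℕ) < k → f i = g i) :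
    spanLT f k = spanLT g k := by
  unfold spanLT
  congr 1
  ext x
  constructor
  · rintro ⟨i, hi, rfl⟩; exact ⟨i, hi, (h i hi).symm⟩
  · rintro ⟨i, hi, rfl⟩; exact ⟨i, hi, h i hi⟩

lemma mem_spanLT (f : Fin n → H) {k : ℕ} {i : Fin n} (hi : (i : ℕ) < k) :
    f i ∈ spanLT f k :=
  Submodule.subset_span ⟨i, hi, rfl⟩

lemma real_smul_inner (x y : H) (r : ℝ) : ⟪x, r • y⟫ = (r : ℂ) * ⟪x, y⟫ := by
  rw [RCLike.real_smul_eq_coe_smul (K := ℂ), inner_smul_right]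
  norm_cast

/-- reconstruction formula from the Parseval property -/
lemma reconstruct {W : Submodule ℂ H} {g : Fin n → H} {s : Finset (Fin n)}
    (hmem : ∀ i ∈ s, g i ∈ W)
    (hpar : ∀ w ∈ W, ∑ i ∈ s, ‖⟪w, g i⟫‖ ^ 2 = ‖w‖ ^ 2) :
    ∀ w ∈ W, ∑ i ∈ s, ⟪g i, w⟫ • g i = w := by
  have hSmem : ∀ x : H, (∑ i ∈ s, ⟪g i, x⟫ • g i) ∈ W :=
    fun x => Submodule.sum_mem _ fun i hi => Submodule.smul_mem _ _ (hmem i hi)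
  let T : W →ₗ[ℂ] W :=
    { toFun := fun x => (⟨∑ i ∈ s, ⟪g i, (x : H)⟫ • g i, hSmem x⟩ : W) - x
      map_add' := by
        intro x y
        ext
        push_cast
        simp only [inner_add_right, add_smul, Finset.sum_add_distrib]
        abel
      map_smul' := by
        intro c x
        ext
        push_cast
        simp only [inner_smul_right, smul_smul, ← Finset.smul_sum, smul_sub]
        ring_nf
        simp [Finset.smul_sum, smul_smul, smul_sub] }
  have hT : ∀ x : W, ⟪T x, x⟫ = 0 := by
    intro x
    have hx := hpar (x : H) x.2
    simp only [T, LinearMap.coe_mk, AddHom.coe_mk, Submodule.coe_inner, AddSubgroupClass.coe_sub]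
    rw [inner_sub_left, sum_inner]
    have h1 : ∀ i ∈ s, ⟪⟪g i, (x : H)⟫ • g i, (x : H)⟫ = (‖⟪(x : H), g i⟫‖ ^ 2 : ℝ) := by
      intro i _
      rw [inner_smul_left, RCLike.conj_mul, norm_inner_symm (g i)]
      norm_cast
    have h2 : (∑ i ∈ s, ((‖⟪(x : H), g i⟫‖ ^ 2 : ℝ) : ℂ)) = ((‖(x : H)‖ ^ 2 : ℝ) : ℂ) := by
      rw [← Complex.ofReal_sum, hx]
    rw [Finset.sum_congr rfl h1, h2, inner_self_eq_norm_sq_to_K]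
    push_cast
    exact sub_self _
  have hT0 : T = 0 := (inner_map_self_eq_zero T).mp hT
  intro w hw
  have h := LinearMap.congr_fun hT0 (⟨w, hw⟩ : W)
  have h2 : (∑ i ∈ s, ⟪g i, w⟫ • g i) - w = 0 := by
    simpa [T, Subtype.ext_iff] using h
  exact sub_eq_zero.mp h2


lemma PK_succ (k : Fin n) : PK n ((k : ℕ) + 1) = insert k (PK n (k : ℕ)) := by
  ext i
  rw [mem_PK, Finset.mem_insert, mem_PK, Fin.ext_iff]
  omega

lemma k_not_mem_PK (k : Fin n) : k ∉ PK n (k : ℕ) := by rw [mem_PK]; omega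

/-- The invariant maintained by the GGSP recursion. -/
def Inv (f g : Fin n → H) (m : ℕ) : Prop :=
  (∀ i : Fin n, m ≤ (i : ℕ) → g i = f i) ∧
  (∀ i : Fin n, (i : ℕ) < m → g i ∈ spanLT f m) ∧
  (∀ w ∈ spanLT f m, ∑ i ∈ PK n m, ‖⟪w, g i⟫‖ ^ 2 = ‖w‖ ^ 2) ∧
  spanLT g m = spanLT f m

lemma step_inv (f : Fin n → H) (k : Fin n) (g : Fin n → H) (h : Inv f g (k : ℕ)) :
    Inv f (ggspStep k (f k) g) ((k : ℕ) + 1) := by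
  obtain ⟨h1, h2, h3, h4⟩ := h
  by_cases hfk : f k = 0
  · -- Case A : f k = 0
    have hstep : ggspStep k (f k) g = Function.update g k 0 := by
      rw [hfk, ggspStep_zero]
    rw [hstep]
    have hspan : spanLT f ((k : ℕ) + 1) = spanLT f (k : ℕ) := by
      rw [spanLT_succ, hfk]
      simp
    refine ⟨?_, ?_, ?_, ?_⟩
    · intro i hi
      rw [Function.update_of_ne (fun hc => by subst hc; omega), h1 i (by omega)]
    · intro i hi
      rcases eq_or_ne i k with rfl | hik
      · rw [Function.update_self]
        exact Submodule.zero_mem _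
      · rw [Function.update_of_ne hik, hspan]
        exact h2 i (by have := Fin.val_ne_of_ne hik; omega)
    · intro w hw
      rw [hspan] at hw
      rw [PK_succ, Finset.sum_insert (k_not_mem_PK k), Function.update_self]
      have hcg : ∀ i ∈ PK n (k : ℕ), ‖⟪w, Function.update g k 0 i⟫‖ ^ 2 = ‖⟪w, g i⟫‖ ^ 2 := by
        intro i hi
        rw [Function.update_of_ne (fun hc => (k_not_mem_PK k) (by rw [hc] at hi; exact hi))]
      rw [Finset.sum_congr rfl hcg, h3 w hw]
      simp
    · have hcongr : spanLT (Function.update g k 0) (k : ℕ) = spanLT g (k : ℕ) :=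
        spanLT_congr _ (fun i hi => Function.update_of_ne
          (fun hc : i = k => by subst hc; omega) 0 g)
      rw [hspan, spanLT_succ, Function.update_self, hcongr, h4]
      simp
  · by_cases hu : uVec k (f k) g = 0
    · -- Case C : dependent step
      have hstep := ggspStep_dep hfk k g hu
      set t : ℝ := ‖f k‖ ^ 2 with ht_def
      have ht : 0 < t := by
        rw [ht_def]
        exact pow_pos (norm_pos_iff.mpr hfk) 2
      set s : ℝ := Real.sqrt (1 + t) with hs_def
      have hs2 : s ^ 2 = 1 + t := Real.sq_sqrt (by linarith)
      have hs0 : 0 < s := Real.sqrt_pos.mpr (by linarith)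
      have ht0 : t ≠ 0 := ne_of_gt ht
      have hsne : s ≠ 0 := ne_of_gt hs0
      set r : ℝ := (1 / t) * (1 / s - 1) with hr_def
      have hkey : 2 * r + r ^ 2 * t + s⁻¹ ^ 2 = 0 := by
        rw [hr_def]
        field_simp
        linear_combination (s ^ 3 * ‖f k‖ ^ 4 - 1) * (hs2 + ht_def) - s ^ 3 * ‖f k‖ ^ 4 * hs2
      have hfkW : f k ∈ spanLT f (k : ℕ) := by
        have h0 := hu
        rw [uVec, sub_eq_zero] at h0
        rw [h0]
        exact Submodule.sum_mem _ fun j hj => Submodule.smul_mem _ _ (h2 j (mem_PK.mp hj))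
      have hspan : spanLT f ((k : ℕ) + 1) = spanLT f (k : ℕ) := by
        rw [spanLT_succ]
        exact sup_eq_left.mpr ((Submodule.span_singleton_le_iff_mem _ _).mpr hfkW)
      have hglt : ∀ i : Fin n, (i : ℕ) < (k : ℕ) →
          ggspStep k (f k) g i = g i + r • (⟪f k, g i⟫ • f k) := by
        intro i hi
        rw [hstep]
        simp only
        rw [if_pos hi]
      have hgk : ggspStep k (f k) g k = s⁻¹ • f k := by
        rw [hstep]
        simp
      have hggt : ∀ i : Fin n, (k : ℕ) < (i : ℕ) → ggspStep k (f k) g i = g i := by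
        intro i hi
        rw [hstep]
        simp only
        rw [if_neg (by omega), if_neg (fun hc : i = k => by subst hc; omega)]
      have hmem' : ∀ i : Fin n, (i : ℕ) < (k : ℕ) + 1 →
          ggspStep k (f k) g i ∈ spanLT f ((k : ℕ) + 1) := by
        intro i hi
        rw [hspan]
        rcases eq_or_ne i k with rfl | hik
        · rw [hgk]
          exact Submodule.smul_of_tower_mem _ _ hfkW
        · have hik' : (i : ℕ) < (k : ℕ) := by have := Fin.val_ne_of_ne hik; omega
          rw [hglt i hik']
          exact add_mem (h2 i hik')
            (Submodule.smul_of_tower_mem _ _ (Submodule.smul_mem _ _ hfkW))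
      refine ⟨?_, hmem', ?_, ?_⟩
      · intro i hi
        rw [hggt i (by omega), h1 i (by omega)]
      · intro w hw
        rw [hspan] at hw
        rw [PK_succ, Finset.sum_insert (k_not_mem_PK k), hgk]
        set b : ℂ := ⟪w, f k⟫ with hb_def
        set v : H := w + ((r : ℂ) * (starRingEnd ℂ) b) • f k with hv_def
        have hvW : v ∈ spanLT f (k : ℕ) := add_mem hw (Submodule.smul_mem _ _ hfkW)
        have hterms : ∀ i ∈ PK n (k : ℕ),
            ‖⟪w, ggspStep k (f k) g i⟫‖ ^ 2 = ‖⟪v, g i⟫‖ ^ 2 := by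
          intro i hi
          have hinner : ⟪w, ggspStep k (f k) g i⟫ = ⟪v, g i⟫ := by
            rw [hglt i (mem_PK.mp hi), hv_def, inner_add_right, inner_add_left,
              real_smul_inner, inner_smul_right, inner_smul_left, map_mul,
              Complex.conj_conj, Complex.conj_ofReal, ← hb_def]
            ring
          rw [hinner]
        rw [Finset.sum_congr rfl hterms, h3 v hvW]
        have hterm_k : ⟪w, s⁻¹ • f k⟫ = ((s⁻¹ : ℝ) : ℂ) * b := by
          rw [real_smul_inner, hb_def]
        have hre : ⟪w, ((r : ℂ) * (starRingEnd ℂ) b) • f k⟫ =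
            ((r * ‖b‖ ^ 2 : ℝ) : ℂ) := by
          rw [inner_smul_right, ← hb_def,
            show (r : ℂ) * (starRingEnd ℂ) b * b = (r : ℂ) * ((starRingEnd ℂ) b * b) from by ring,
            RCLike.conj_mul]
          push_cast
          ring_nf
          rfl
        have hnv : ‖v‖ ^ 2 = ‖w‖ ^ 2 + (2 * r + r ^ 2 * t) * ‖b‖ ^ 2 := by
          rw [hv_def, norm_add_sq (𝕜 := ℂ), hre,
            show RCLike.re (((r * ‖b‖ ^ 2 : ℝ) : ℂ)) = r * ‖b‖ ^ 2 from by
              rw [RCLike.re_to_complex, Complex.ofReal_re],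
            norm_smul, norm_mul, RCLike.norm_conj, Complex.norm_real, Real.norm_eq_abs, ht_def,
            mul_pow, mul_pow, sq_abs]
          ring
        have hns : ‖((s⁻¹ : ℝ) : ℂ)‖ = s⁻¹ := by
          rw [Complex.norm_real, Real.norm_eq_abs, abs_of_pos (inv_pos.mpr hs0)]
        rw [hterm_k, hnv, norm_mul, hns]
        linear_combination ‖b‖ ^ 2 * hkey
      · apply le_antisymm
        · rw [spanLT, Submodule.span_le]
          rintro x ⟨i, hi, rfl⟩
          exact hmem' i hi
        · have hfk' : f k ∈ spanLT (ggspStep k (f k) g) ((k : ℕ) + 1) := by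
            have hm := Submodule.smul_of_tower_mem
              (spanLT (ggspStep k (f k) g) ((k : ℕ) + 1)) s
              (mem_spanLT (ggspStep k (f k) g) (k := (k : ℕ) + 1) (i := k) (by omega))
            rw [hgk, smul_inv_smul₀ (ne_of_gt hs0)] at hm
            exact hm
          rw [hspan, ← h4, spanLT, Submodule.span_le]
          rintro x ⟨i, hi, rfl⟩
          have hi' : (i : ℕ) < (k : ℕ) := hi
          have hgi : g i = ggspStep k (f k) g i - r • (⟪f k, g i⟫ • f k) := by
            rw [hglt i hi', add_sub_cancel_right]
          rw [hgi]
          exact sub_mem (mem_spanLT _ (i := i) (by omega))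
            (Submodule.smul_of_tower_mem _ _ (Submodule.smul_mem _ _ hfk'))
    · -- Case B : independent (Gram--Schmidt) step
      set u : H := uVec k (f k) g with hu_def
      have hstep : ggspStep k (f k) g = Function.update g k (‖u‖⁻¹ • u) :=
        ggspStep_indep hfk k g hu
      have hun : ‖u‖ ≠ 0 := norm_ne_zero_iff.mpr hu
      set e : H := ‖u‖⁻¹ • u with he_def
      have he : ‖e‖ = 1 := by
        rw [he_def, norm_smul, norm_inv, norm_norm, inv_mul_cancel₀ hun]
      have hSW : (∑ j ∈ PK n (k : ℕ), ⟪g j, f k⟫ • g j) ∈ spanLT f (k : ℕ) :=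
        Submodule.sum_mem _ fun j hj => Submodule.smul_mem _ _ (h2 j (mem_PK.mp hj))
      have hrec := reconstruct (fun i hi => h2 i (mem_PK.mp hi)) h3
      have huperp : ∀ x ∈ spanLT f (k : ℕ), ⟪x, u⟫ = 0 := by
        intro x hx
        have hx' := hrec x hx
        rw [hu_def, uVec, inner_sub_right, sub_eq_zero, inner_sum]
        conv_lhs => rw [← hx', sum_inner]
        refine Finset.sum_congr rfl fun j hj => ?_
        rw [inner_smul_left, inner_smul_right, inner_conj_symm]
        ring
      have heperp : ∀ x ∈ spanLT f (k : ℕ), ⟪x, e⟫ = 0 := by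
        intro x hx
        rw [he_def, RCLike.real_smul_eq_coe_smul (K := ℂ), inner_smul_right,
          huperp x hx, mul_zero]
      have heperp' : ∀ x ∈ spanLT f (k : ℕ), ⟪e, x⟫ = 0 := by
        intro x hx
        rw [← inner_conj_symm, heperp x hx, map_zero]
      have hfk_eq : f k = ‖u‖ • e + ∑ j ∈ PK n (k : ℕ), ⟪g j, f k⟫ • g j := by
        rw [he_def, smul_smul, mul_inv_cancel₀ hun, one_smul, hu_def, uVec]
        abel
      have hspan2 : spanLT f ((k : ℕ) + 1) = spanLT f (k : ℕ) ⊔ (ℂ ∙ e) := by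
        rw [spanLT_succ]
        refine le_antisymm (sup_le le_sup_left ?_) (sup_le le_sup_left ?_)
        · rw [Submodule.span_singleton_le_iff_mem, hfk_eq]
          refine add_mem (Submodule.mem_sup_right ?_) (Submodule.mem_sup_left hSW)
          rw [RCLike.real_smul_eq_coe_smul (K := ℂ)]
          exact Submodule.smul_mem _ _ (Submodule.mem_span_singleton_self e)
        · rw [Submodule.span_singleton_le_iff_mem]
          have he2 : e = (‖u‖⁻¹ : ℝ) •
              (f k - ∑ j ∈ PK n (k : ℕ), ⟪g j, f k⟫ • g j) := by
            rw [he_def, hu_def, uVec]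
          rw [he2, RCLike.real_smul_eq_coe_smul (K := ℂ)]
          exact Submodule.smul_mem _ _
            (sub_mem (Submodule.mem_sup_right (Submodule.mem_span_singleton_self _))
              (Submodule.mem_sup_left hSW))
      have hWle : spanLT f (k : ℕ) ≤ spanLT f ((k : ℕ) + 1) := by
        rw [hspan2]; exact le_sup_left
      rw [hstep]
      refine ⟨?_, ?_, ?_, ?_⟩
      · intro i hi
        rw [Function.update_of_ne (fun hc : i = k => by subst hc; omega), h1 i (by omega)]
      · intro i hi
        rcases eq_or_ne i k with rfl | hik
        · rw [Function.update_self, hspan2]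
          exact Submodule.mem_sup_right (Submodule.mem_span_singleton_self e)
        · rw [Function.update_of_ne hik]
          exact hWle (h2 i (by have := Fin.val_ne_of_ne hik; omega))
      · intro w hw
        rw [hspan2] at hw
        obtain ⟨x, hx, y, hy, rfl⟩ := Submodule.mem_sup.mp hw
        obtain ⟨c, rfl⟩ := Submodule.mem_span_singleton.mp hy
        rw [PK_succ, Finset.sum_insert (k_not_mem_PK k), Function.update_self]
        have hterms : ∀ i ∈ PK n (k : ℕ),
            ‖⟪x + c • e, Function.update g k e i⟫‖ ^ 2 = ‖⟪x, g i⟫‖ ^ 2 := by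
          intro i hi
          rw [Function.update_of_ne (fun hc => (k_not_mem_PK k) (by rw [hc] at hi; exact hi)),
            inner_add_left, inner_smul_left, heperp' (g i) (h2 i (mem_PK.mp hi)),
            mul_zero, add_zero]
        rw [Finset.sum_congr rfl hterms, h3 x hx]
        have hxe : ⟪x, e⟫ = 0 := heperp x hx
        have hterm_k : ⟪x + c • e, e⟫ = (starRingEnd ℂ) c := by
          rw [inner_add_left, hxe, zero_add, inner_smul_left, inner_self_eq_norm_sq_to_K, he]
          norm_num
        have hnorm : ‖x + c • e‖ ^ 2 = ‖x‖ ^ 2 + ‖c‖ ^ 2 := by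
          rw [norm_add_sq (𝕜 := ℂ), inner_smul_right, hxe, mul_zero, map_zero, norm_smul, he]
          ring
        rw [hterm_k, hnorm, RCLike.norm_conj]
        ring
      · have hcongr : spanLT (Function.update g k e) (k : ℕ) = spanLT g (k : ℕ) :=
          spanLT_congr _ (fun i hi => Function.update_of_ne
            (fun hc : i = k => by subst hc; omega) e g)
        rw [spanLT_succ, Function.update_self, hcongr, h4, ← hspan2]

lemma inv_zero (f : Fin n → H) : Inv f f 0 := by
  refine ⟨fun i _ => rfl, fun i hi => absurd hi (by omega), ?_, rfl⟩
  intro w hw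
  have hbot : spanLT f 0 = ⊥ := by
    rw [spanLT]
    convert Submodule.span_empty
    ext x
    simp
  rw [hbot, Submodule.mem_bot] at hw
  subst hw
  have hemp : PK n 0 = ∅ := by
    ext i
    rw [mem_PK]
    simp
  rw [hemp]
  simp

lemma foldl_take_inv (f : Fin n → H) :
    ∀ m, m ≤ n →
      Inv f (((List.finRange n).take m).foldl (fun g k => ggspStep k (f k) g) f) m := by
  intro m
  induction m with
  | zero => intro _; simpa using inv_zero f
  | succ m ih =>
    intro hm
    have hmn : m < n := hm
    have hlen : m < (List.finRange n).length := by simpa using hmn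
    rw [List.take_succ, List.getElem?_eq_getElem hlen]
    simp only [Option.toList_some, List.foldl_append, List.foldl_cons, List.foldl_nil]
    set k : Fin n := (List.finRange n)[m]'hlen with hk
    have hval : (k : ℕ) = m := by rw [hk]; simp [List.getElem_finRange]
    have hprev := ih (le_of_lt hmn)
    rw [← hval] at hprev ⊢
    exact step_inv f k _ hprev

lemma spanLT_n_eq (f : Fin n → H) : spanLT f n = Submodule.span ℂ (Set.range f) := by
  rw [spanLT]
  congr 1
  ext x
  constructor
  · rintro ⟨i, _, rfl⟩
    exact ⟨i, rfl⟩
  · rintro ⟨i, rfl⟩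
    exact ⟨i, i.is_lt, rfl⟩

lemma PK_n_eq : PK n n = Finset.univ := by
  ext i
  rw [mem_PK]
  simp

end GGSPaux

open GGSPaux

/-- For any finite sequence of vectors, `Φ f` is a Parseval frame for
`span {f₁, …, fₙ}`, and the span of the output equals the span of the input. -/
theorem ggsp_parseval_for_span {H : Type*} [NormedAddCommGroup H]
    [InnerProductSpace ℂ H] [FiniteDimensional ℂ H] {n : ℕ} (f : Fin n → H) :
    IsParsevalFrameFor (Submodule.span ℂ (Set.range f)) (GGSP f) ∧
      Submodule.span ℂ (Set.range (GGSP f)) = Submodule.span ℂ (Set.range f) := by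
  have hinv : Inv f (GGSP f) n := by
    have h := foldl_take_inv f n le_rfl
    rwa [List.take_of_length_le (by simp)] at h
  obtain ⟨h1, h2, h3, h4⟩ := hinv
  refine ⟨⟨fun i => ?_, fun w hw => ?_⟩, ?_⟩
  · rw [← spanLT_n_eq]
    exact h2 i i.is_lt
  · rw [← spanLT_n_eq] at hw
    have h := h3 w hw
    rwa [PK_n_eq] at h
  · rw [← spanLT_n_eq, ← spanLT_n_eq]
    exact h4
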